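/- arXiv:2305.09309 — 5 statements merged into one kernel-verified Lean document; each statement's English description precedes it below -/
import Mathlib

section
/- If for all measurable sets B the map θ ↦ P_θ(B) is Fréchet differentiable on a subset Θ of a separable real Hilbert space Ξ, then for every fixed φ ∈ Ξ, the set function B ↦ D_θ P_θ(B)[φ] is countably additive and absolutely continuous with respect to P_θ. -/
open MeasureTheory

local notation "⟪" x ", " y "⟫" => @inner ℝ _ _ x y

open Set Filter Topology
open scoped symmDiff NNReal ENNReal

section Auxiliary

variable {Ω : Type*} [MeasurableSpace Ω]

/-- wrapper type for measurable sets (avoids inheriting the subtype topology) -/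
structure MSet (Ω : Type*) [MeasurableSpace Ω] where
  carrier : Set Ω
  meas : MeasurableSet carrier

/-- distance between two measures of sets -/
lemma abs_toReal_sub_le (ν : Measure Ω) [IsFiniteMeasure ν] (A B : Set Ω) :
    |(ν A).toReal - (ν B).toReal| ≤ (ν (A ∆ B)).toReal := by
  have key : ∀ S T : Set Ω, (ν S).toReal ≤ (ν T).toReal + (ν (S ∆ T)).toReal := by
    intro S T
    have h1 : ν S ≤ ν T + ν (S ∆ T) := by
      refine le_trans (measure_mono ?_) (measure_union_le _ _)
      intro x hx
      by_cases hT : x ∈ T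
      · exact Or.inl hT
      · exact Or.inr (Or.inl ⟨hx, hT⟩)
    calc (ν S).toReal ≤ (ν T + ν (S ∆ T)).toReal :=
          ENNReal.toReal_mono (by finiteness) h1
      _ = (ν T).toReal + (ν (S ∆ T)).toReal :=
          ENNReal.toReal_add (measure_ne_top _ _) (measure_ne_top _ _)
  rw [abs_sub_le_iff]
  constructor
  · linarith [key A B]
  · have := key B A
    rw [symmDiff_comm] at this
    linarith

/-- The pseudometric on measurable sets induced by a finite measure. -/
noncomputable def msetMetric (μ : Measure Ω) [IsFiniteMeasure μ] :
    PseudoMetricSpace (MSet Ω) where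
  dist A B := (μ (A.1 ∆ B.1)).toReal
  dist_self A := by simp
  dist_comm A B := by simp only [symmDiff_comm]
  dist_triangle A B C := by
    have h1 : μ (A.1 ∆ C.1) ≤ μ (A.1 ∆ B.1) + μ (B.1 ∆ C.1) :=
      le_trans (measure_mono (le_trans (symmDiff_triangle _ B.1 _) le_rfl)) (measure_union_le _ _)
    calc (μ (A.1 ∆ C.1)).toReal ≤ (μ (A.1 ∆ B.1) + μ (B.1 ∆ C.1)).toReal :=
          ENNReal.toReal_mono (by finiteness) h1
      _ = _ := ENNReal.toReal_add (measure_ne_top _ _) (measure_ne_top _ _)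

lemma symmDiff_limsup_subset (u : ℕ → Set Ω) (N : ℕ) :
    (u N) ∆ (⋂ M, ⋃ j, u (M + j)) ⊆ ⋃ j, (u (N + j)) ∆ (u (N + j + 1)) := by
  intro x hx
  by_contra hnot
  simp only [mem_iUnion, not_exists] at hnot
  have hiff : ∀ j, x ∈ u (N + j) ↔ x ∈ u N := by
    intro j
    induction j with
    | zero => rfl
    | succ j ih =>
      have := hnot j
      simp only [Set.mem_symmDiff, not_or, not_and, not_not] at this
      have h2 : x ∈ u (N + j) ↔ x ∈ u (N + j + 1) := by tauto
      rw [show N + (j + 1) = N + j + 1 from rfl, ← h2, ih]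
  rcases Set.mem_symmDiff.mp hx with ⟨hxu, hxL⟩ | ⟨hxL, hxu⟩
  · -- x ∈ u N, x ∉ limsup
    apply hxL
    simp only [mem_iInter, mem_iUnion]
    intro M
    exact ⟨N, by rw [show M + N = N + M by ring, hiff M]; exact hxu⟩
  · -- x ∈ limsup, x ∉ u N
    simp only [mem_iInter, mem_iUnion] at hxL
    obtain ⟨j, hj⟩ := hxL N
    exact hxu ((hiff j).mp hj)

lemma msetCompleteSpace (μ : Measure Ω) [IsFiniteMeasure μ] :
    @CompleteSpace (MSet Ω) (msetMetric μ).toUniformSpace := by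
  letI := msetMetric μ
  apply Metric.complete_of_convergent_controlled_sequences (fun n => (1/2 : ℝ)^n)
    (fun n => by positivity)
  intro u hu
  set L : Set Ω := ⋂ M, ⋃ j, (u (M + j)).1 with hL
  have hLm : MeasurableSet L :=
    MeasurableSet.iInter (fun M => MeasurableSet.iUnion (fun j => (u (M + j)).2))
  refine ⟨⟨L, hLm⟩, ?_⟩
  have hdist : ∀ A B : MSet Ω, dist A B = (μ (A.1 ∆ B.1)).toReal :=
    fun A B => rfl
  have hbound : ∀ N, dist (u N) (⟨L, hLm⟩ : MSet Ω)
      ≤ (1/2 : ℝ)^N * 2 := by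
    intro N
    rw [hdist]
    have h1 : μ ((u N).1 ∆ L) ≤ ∑' j, μ ((u (N + j)).1 ∆ (u (N + j + 1)).1) :=
      le_trans (measure_mono (symmDiff_limsup_subset (fun n => (u n).1) N)) (measure_iUnion_le _)
    have h2 : ∀ j, μ ((u (N + j)).1 ∆ (u (N + j + 1)).1) ≤ ENNReal.ofReal ((1/2 : ℝ)^(N+j)) := by
      intro j
      have := hu (N + j) (N + j) (N + j + 1) le_rfl (Nat.le_succ _)
      rw [hdist] at this
      exact le_of_lt ((ENNReal.lt_ofReal_iff_toReal_lt (measure_ne_top _ _)).mpr this)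
    have h3 : (∑' j, ENNReal.ofReal ((1/2 : ℝ)^(N+j))) = ENNReal.ofReal ((1/2 : ℝ)^N * 2) := by
      rw [← ENNReal.ofReal_tsum_of_nonneg (fun j => by positivity)]
      · congr 1
        have : ∀ j : ℕ, (1/2 : ℝ)^(N+j) = (1/2 : ℝ)^N * (1/2 : ℝ)^j := fun j => pow_add _ _ _
        simp_rw [this]
        rw [tsum_mul_left, tsum_geometric_of_lt_one (by norm_num) (by norm_num)]
        norm_num
      · simpa [pow_add] using
          (summable_geometric_of_lt_one (by norm_num : (0:ℝ) ≤ 1/2) (by norm_num)).mul_left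
            ((1/2 : ℝ)^N)
    calc (μ ((u N).1 ∆ L)).toReal ≤ (ENNReal.ofReal ((1/2 : ℝ)^N * 2)).toReal := by
          refine ENNReal.toReal_mono ENNReal.ofReal_ne_top ?_
          exact le_trans h1 (le_trans (ENNReal.tsum_le_tsum h2) h3.le)
      _ = (1/2 : ℝ)^N * 2 := ENNReal.toReal_ofReal (by positivity)
  rw [tendsto_iff_dist_tendsto_zero]
  refine squeeze_zero (fun n => dist_nonneg) hbound ?_
  have := (tendsto_pow_atTop_nhds_zero_of_lt_one (by norm_num : (0:ℝ) ≤ 1/2) (by norm_num)).mul_const (2:ℝ)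
  simpa using this

lemma vhs_key (μ : Measure Ω) [IsFiniteMeasure μ]
    (lam : ℕ → Set Ω → ℝ) (Λ : Set Ω → ℝ) (C : ℕ → ℝ≥0)
    (hLip : ∀ k (A B : Set Ω), MeasurableSet A → MeasurableSet B →
      |lam k A - lam k B| ≤ (C k : ℝ) * (μ (A ∆ B)).toReal)
    (hAdd : ∀ k (A B : Set Ω), MeasurableSet A → MeasurableSet B → Disjoint A B →
      lam k (A ∪ B) = lam k A + lam k B)
    (hTend : ∀ B : Set Ω, MeasurableSet B → Tendsto (fun k => lam k B) atTop (𝓝 (Λ B)))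
    {ε : ℝ} (hε : 0 < ε) :
    ∃ δ > 0, ∀ E : Set Ω, MeasurableSet E → (μ E).toReal < δ → |Λ E| ≤ ε := by
  classical
  set X := MSet Ω
  letI : PseudoMetricSpace X := msetMetric μ
  haveI : CompleteSpace X := msetCompleteSpace μ
  haveI : Nonempty X := ⟨⟨∅, MeasurableSet.empty⟩⟩
  have hdist : ∀ A B : X, dist A B = (μ (A.1 ∆ B.1)).toReal := fun A B => rfl
  set ε' : ℝ := ε / 3 with hε'
  have hε'pos : 0 < ε' := by positivity
  have hcont : ∀ k, Continuous (fun B : X => lam k B.1) := by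
    intro k
    refine (LipschitzWith.of_dist_le_mul (K := C k) (fun A B => ?_)).continuous
    rw [Real.dist_eq, hdist]
    exact hLip k A.1 B.1 A.2 B.2
  set E : ℕ → Set X := fun m =>
    {B : X | ∀ j k, m ≤ j → m ≤ k → |lam j B.1 - lam k B.1| ≤ ε'} with hE
  have hclosed : ∀ m, IsClosed (E m) := by
    intro m
    have : E m = ⋂ (j) (k), {B : X | m ≤ j → m ≤ k → |lam j B.1 - lam k B.1| ≤ ε'} := by
      ext B; simp [hE, mem_iInter]
    rw [this]
    refine isClosed_iInter (fun j => isClosed_iInter (fun k => ?_))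
    by_cases hj : m ≤ j
    · by_cases hk : m ≤ k
      · have : {B : X | m ≤ j → m ≤ k → |lam j B.1 - lam k B.1| ≤ ε'}
            = {B : X | |lam j B.1 - lam k B.1| ≤ ε'} := by
          ext B; simp [hj, hk]
        rw [this]
        exact isClosed_le (continuous_abs.comp ((hcont j).sub (hcont k))) continuous_const
      · have : {B : X | m ≤ j → m ≤ k → |lam j B.1 - lam k B.1| ≤ ε'} = univ := by
          ext B; simp [hk]
        rw [this]; exact isClosed_univ
    · have : {B : X | m ≤ j → m ≤ k → |lam j B.1 - lam k B.1| ≤ ε'} = univ := by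
        ext B; simp [hj]
      rw [this]; exact isClosed_univ
  have hcover : (⋃ m, E m) = univ := by
    rw [eq_univ_iff_forall]
    intro B
    have hc : CauchySeq (fun k => lam k B.1) := (hTend B.1 B.2).cauchySeq
    obtain ⟨N, hN⟩ := Metric.cauchySeq_iff.mp hc ε' hε'pos
    refine mem_iUnion.mpr ⟨N, fun j k hj hk => ?_⟩
    have := hN j hj k hk
    rw [Real.dist_eq] at this
    exact this.le
  obtain ⟨m, x, hx⟩ := nonempty_interior_of_iUnion_of_closed hclosed hcover
  obtain ⟨r, hr, hball⟩ := Metric.isOpen_iff.mp isOpen_interior x hx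
  have hballE : Metric.ball x r ⊆ E m := le_trans hball interior_subset
  set B₀ : Set Ω := x.1 with hB₀
  set Lm : ℝ≥0 := (Finset.range (m+1)).sup C with hLm
  have hlamempty : ∀ k, lam k ∅ = 0 := by
    intro k
    have := hAdd k ∅ ∅ MeasurableSet.empty MeasurableSet.empty (by simp)
    simp at this
    linarith
  have hsmall : ∀ k, k ≤ m → ∀ (S : Set Ω), MeasurableSet S →
      (μ S).toReal ≤ ε' / (Lm + 1) → |lam k S| ≤ ε' := by
    intro k hk S hS hμS
    have h1 : |lam k S| ≤ (C k : ℝ) * (μ S).toReal := by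
      have := hLip k S ∅ hS MeasurableSet.empty
      rw [show S ∆ (∅ : Set Ω) = S by simp [Set.symmDiff_def], hlamempty k, sub_zero] at this
      exact this
    have h2 : (C k : ℝ) ≤ (Lm : ℝ) := by
      exact_mod_cast Finset.le_sup (Finset.mem_range.mpr (Nat.lt_succ_of_le hk))
    calc |lam k S| ≤ (Lm : ℝ) * (μ S).toReal := by
          refine le_trans h1 (mul_le_mul_of_nonneg_right h2 ENNReal.toReal_nonneg)
      _ ≤ (Lm : ℝ) * (ε' / (Lm + 1)) := by
          refine mul_le_mul_of_nonneg_left hμS (by positivity)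
      _ ≤ ε' := by
          rw [div_eq_inv_mul, ← mul_assoc]
          have hL1 : (0:ℝ) < (Lm:ℝ) + 1 := by positivity
          have : (Lm:ℝ) * ((Lm:ℝ)+1)⁻¹ ≤ 1 := by
            rw [mul_inv_le_iff₀ hL1]; linarith
          nlinarith [hε'pos.le]
  refine ⟨min r (ε' / (Lm + 1)), by positivity, ?_⟩
  intro S hS hμS
  have hμSr : (μ S).toReal < r := lt_of_lt_of_le hμS (min_le_left _ _)
  have hμSL : (μ S).toReal ≤ ε' / (Lm + 1) := le_of_lt (lt_of_lt_of_le hμS (min_le_right _ _))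
  -- uniform bound on all lam k S
  have hunif : ∀ k, |lam k S| ≤ 3 * ε' := by
    intro k
    by_cases hk : k ≤ m
    · linarith [hsmall k hk S hS hμSL, abs_nonneg (lam k S)]
    push_neg at hk
    have hkm : m ≤ k := hk.le
    set A1 : Set Ω := B₀ ∪ S with hA1
    set A2 : Set Ω := B₀ \ S with hA2
    have hA1m : MeasurableSet A1 := x.2.union hS
    have hA2m : MeasurableSet A2 := x.2.diff hS
    have hmem1 : (⟨A1, hA1m⟩ : X) ∈ E m := by
      apply hballE
      rw [Metric.mem_ball, hdist]
      have hsub : A1 ∆ B₀ ⊆ S := by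
        intro y hy
        rcases Set.mem_symmDiff.mp hy with ⟨h1, h2⟩ | ⟨h1, h2⟩
        · rcases h1 with h | h
          · exact absurd h h2
          · exact h
        · exact absurd (Or.inl h1) h2
      exact lt_of_le_of_lt (ENNReal.toReal_mono (measure_ne_top _ _) (measure_mono hsub)) hμSr
    have hmem2 : (⟨A2, hA2m⟩ : X) ∈ E m := by
      apply hballE
      rw [Metric.mem_ball, hdist]
      have hsub : A2 ∆ B₀ ⊆ S := by
        intro y hy
        rcases Set.mem_symmDiff.mp hy with ⟨h1, h2⟩ | ⟨h1, h2⟩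
        · exact absurd h1.1 h2
        · by_contra hyS; exact h2 ⟨h1, hyS⟩
      exact lt_of_le_of_lt (ENNReal.toReal_mono (measure_ne_top _ _) (measure_mono hsub)) hμSr
    have hsplit : ∀ j, lam j A1 = lam j A2 + lam j S := by
      intro j
      have : A2 ∪ S = A1 := Set.diff_union_self
      rw [← this]
      exact hAdd j A2 S hA2m hS disjoint_sdiff_left
    have e1 : |lam k A1 - lam m A1| ≤ ε' := hmem1 k m hkm le_rfl
    have e2 : |lam k A2 - lam m A2| ≤ ε' := hmem2 k m hkm le_rfl
    have e3 : |lam m S| ≤ ε' := hsmall m le_rfl S hS hμSL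
    have hk1 := hsplit k
    have hm1 := hsplit m
    have : lam k S = (lam k A1 - lam m A1) - (lam k A2 - lam m A2) + lam m S := by
      linarith
    rw [this]
    have t1 := abs_add_le ((lam k A1 - lam m A1) - (lam k A2 - lam m A2)) (lam m S)
    have t2 := abs_sub (lam k A1 - lam m A1) (lam k A2 - lam m A2)
    linarith
  have hlim : Tendsto (fun k => |lam k S|) atTop (𝓝 |Λ S|) := (hTend S hS).abs
  have : |Λ S| ≤ 3 * ε' := le_of_tendsto' hlim hunif
  linarith [this]

end Auxiliary

/-- If for all measurable sets `B` the map `θ ↦ P θ B` is Fréchet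
differentiable on `Θ ⊆ Ξ` (Ξ a separable real Hilbert space), with derivative the bounded
linear functional `D θ B : Ξ →L[ℝ] ℝ`, then for every fixed `φ ∈ Ξ` the set function
`B ↦ D θ B φ` is countably additive and absolutely continuous with respect to `P θ`. -/
theorem statement0
    {Ω : Type*} [MeasurableSpace Ω]
    {Ξ : Type*} [NormedAddCommGroup Ξ] [InnerProductSpace ℝ Ξ] [CompleteSpace Ξ]
    [SecondCountableTopology Ξ]
    (Θ : Set Ξ) (P : Ξ → Measure Ω)
    (hProb : ∀ θ ∈ Θ, IsProbabilityMeasure (P θ))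
    (D : Ξ → Set Ω → (Ξ →L[ℝ] ℝ))
    (hD : ∀ B : Set Ω, MeasurableSet B → ∀ θ ∈ Θ,
      HasFDerivAt (fun t => (P t B).toReal) (D θ B) θ)
    (θ : Ξ) (hθ : θ ∈ Θ) (φ : Ξ) :
    (∀ s : ℕ → Set Ω, (∀ n, MeasurableSet (s n)) → Pairwise (Function.onFun Disjoint s) →
        HasSum (fun n => D θ (s n) φ) (D θ (⋃ n, s n) φ)) ∧
    (∀ B : Set Ω, MeasurableSet B → P θ B = 0 → D θ B φ = 0) := by
  classical
  haveI : IsProbabilityMeasure (P θ) := hProb θ hθ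
  -- Part 2 : absolute continuity
  have habs : ∀ B : Set Ω, MeasurableSet B → P θ B = 0 → D θ B φ = 0 := by
    intro B hB h0
    have hmin : IsLocalMin (fun t => (P t B).toReal) θ :=
      Filter.Eventually.of_forall (fun u => by
        simp only [h0, ENNReal.toReal_zero]
        exact ENNReal.toReal_nonneg)
    have := hmin.hasFDerivAt_eq_zero (hD B hB θ hθ)
    rw [this]
    rfl
  refine ⟨?_, habs⟩
  -- finiteness neighborhood
  obtain ⟨ε₀, hε₀, hball⟩ : ∃ ε₀ > 0, ∀ u : Ξ, dist u θ < ε₀ →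
      dist ((P u Set.univ).toReal) ((P θ Set.univ).toReal) < 1/2 := by
    have := Metric.continuousAt_iff.mp (hD Set.univ MeasurableSet.univ θ hθ).continuousAt
      (1/2) (by norm_num)
    obtain ⟨δ, hδ, hδ'⟩ := this
    exact ⟨δ, hδ, fun u hu => hδ' hu⟩
  have hfin : ∀ u : Ξ, dist u θ < ε₀ → P u Set.univ ≤ 2 := by
    intro u hu
    have h1 := hball u hu
    rw [Real.dist_eq] at h1
    have hθ1 : ((P θ) Set.univ).toReal = 1 := by simp
    rw [hθ1, abs_lt] at h1
    have hne : P u Set.univ ≠ ⊤ := by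
      intro htop
      rw [htop] at h1
      simp at h1
      linarith [h1.1]
    rw [← ENNReal.ofReal_toReal hne]
    calc ENNReal.ofReal ((P u Set.univ).toReal) ≤ ENNReal.ofReal 2 :=
          ENNReal.ofReal_le_ofReal (by linarith [h1.2])
      _ = 2 := by norm_num
  -- finite additivity of D θ
  have hDadd : ∀ A B : Set Ω, MeasurableSet A → MeasurableSet B → Disjoint A B →
      D θ (A ∪ B) = D θ A + D θ B := by
    intro A B hA hB hAB
    have hg : HasFDerivAt (fun u => (P u A).toReal + (P u B).toReal) (D θ A + D θ B) θ :=
      (hD A hA θ hθ).add (hD B hB θ hθ)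
    have heq : (fun u => (P u (A ∪ B)).toReal)
        =ᶠ[nhds θ] (fun u => (P u A).toReal + (P u B).toReal) := by
      filter_upwards [Metric.ball_mem_nhds θ hε₀] with u hu
      have hufin := hfin u (by rwa [Metric.mem_ball] at hu)
      have hAfin : P u A ≠ ⊤ :=
        ne_top_of_le_ne_top (by norm_num)
          (le_trans (measure_mono (Set.subset_univ A)) hufin)
      have hBfin : P u B ≠ ⊤ :=
        ne_top_of_le_ne_top (by norm_num)
          (le_trans (measure_mono (Set.subset_univ B)) hufin)
      rw [measure_union hAB hB, ENNReal.toReal_add hAfin hBfin]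
    exact (hD (A ∪ B) (hA.union hB) θ hθ).unique (hg.congr_of_eventuallyEq heq)
  have hDempty : D θ (∅ : Set Ω) = 0 := by
    have h0 : HasFDerivAt (fun _ : Ξ => (0:ℝ)) (0 : Ξ →L[ℝ] ℝ) θ := hasFDerivAt_const 0 θ
    exact (hD ∅ MeasurableSet.empty θ hθ).unique
      (h0.congr_of_eventuallyEq (Filter.Eventually.of_forall (fun u => by simp)))
  -- difference quotient sequence
  obtain ⟨K, hK⟩ := exists_nat_gt (‖φ‖ / ε₀)
  set c : ℕ → ℝ := fun k => (k : ℝ) + K + 1 with hc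
  have hcpos : ∀ k, 0 < c k := fun k => by positivity
  set tt : ℕ → Ξ := fun k => θ + (c k)⁻¹ • φ with htt
  have hdist_t : ∀ k, dist (tt k) θ < ε₀ := by
    intro k
    rw [htt]
    simp only [dist_self_add_left]
    rw [norm_smul, norm_inv, Real.norm_eq_abs, abs_of_pos (hcpos k)]
    rw [inv_mul_eq_div, div_lt_iff₀ (hcpos k)]
    have h1 : ‖φ‖ < ε₀ * K := by
      rw [div_lt_iff₀ hε₀] at hK
      linarith [hK]
    have h2 : (K:ℝ) ≤ c k := by
      simp only [hc]
      have : (0:ℝ) ≤ (k:ℝ) := Nat.cast_nonneg k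
      linarith
    calc ‖φ‖ < ε₀ * K := h1
      _ ≤ ε₀ * c k := by nlinarith
  have hPt_ne : ∀ k (S : Set Ω), P (tt k) S ≠ ⊤ := fun k S =>
    ne_top_of_le_ne_top (by norm_num)
      (le_trans (measure_mono (Set.subset_univ S)) (hfin _ (hdist_t k)))
  haveI hPtfin : ∀ k, IsFiniteMeasure (P (tt k)) := fun k =>
    ⟨lt_of_le_of_lt (hfin _ (hdist_t k)) (by norm_num)⟩
  -- dominating finite measure
  set ν : Measure Ω := Measure.sum (fun k => ((2:ENNReal)⁻¹)^k • P (tt k)) with hν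
  set μ : Measure Ω := P θ + ν with hμ
  have hν_univ : ν Set.univ ≤ 4 := by
    rw [hν, Measure.sum_apply _ MeasurableSet.univ]
    have hterm : ∀ k, (((2:ENNReal)⁻¹)^k • P (tt k)) Set.univ ≤ ((2:ENNReal)⁻¹)^k * 2 := by
      intro k
      rw [Measure.smul_apply, smul_eq_mul]
      exact mul_le_mul_right (hfin _ (hdist_t k)) _
    refine le_trans (ENNReal.tsum_le_tsum hterm) ?_
    rw [ENNReal.tsum_mul_right, ENNReal.tsum_geometric, ENNReal.one_sub_inv_two, inv_inv]
    norm_num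
  haveI : IsFiniteMeasure μ := by
    constructor
    rw [hμ, Measure.add_apply]
    calc P θ Set.univ + ν Set.univ ≤ 1 + 4 :=
          add_le_add (le_of_eq measure_univ) hν_univ
      _ < ⊤ := by norm_num
  have hμ1 : ∀ S : Set Ω, P θ S ≤ μ S := by
    intro S
    rw [hμ, Measure.add_apply]
    exact self_le_add_right _ _
  have hμ2 : ∀ k (S : Set Ω), P (tt k) S ≤ 2^k * μ S := by
    intro k S
    have h1 : ((2:ENNReal)⁻¹)^k * P (tt k) S ≤ μ S := by
      rw [hμ, Measure.add_apply]
      refine le_trans ?_ (le_add_self)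
      have := Measure.le_iff'.mp (Measure.le_sum (fun k => ((2:ENNReal)⁻¹)^k • P (tt k)) k) S
      rwa [Measure.smul_apply, smul_eq_mul] at this
    calc P (tt k) S = (2:ENNReal)^k * (((2:ENNReal)⁻¹)^k * P (tt k) S) := by
          rw [← mul_assoc, ← mul_pow, ENNReal.mul_inv_cancel (by norm_num) (by norm_num),
            one_pow, one_mul]
      _ ≤ 2^k * μ S := mul_le_mul_right h1 _
  -- the difference quotients
  set lam : ℕ → Set Ω → ℝ :=
    fun k B => ((P (tt k) B).toReal - (P θ B).toReal) * c k with hlam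
  set C : ℕ → NNReal := fun k => (2^k + 1 : NNReal) * Real.toNNReal (c k) with hC
  have hLip : ∀ k (A B : Set Ω), MeasurableSet A → MeasurableSet B →
      |lam k A - lam k B| ≤ (C k : ℝ) * (μ (A ∆ B)).toReal := by
    intro k A B hA hB
    have e1 : |(P (tt k) A).toReal - (P (tt k) B).toReal| ≤ (P (tt k) (A ∆ B)).toReal :=
      abs_toReal_sub_le _ _ _
    have e2 : |(P θ A).toReal - (P θ B).toReal| ≤ (P θ (A ∆ B)).toReal :=
      abs_toReal_sub_le _ _ _
    have e3 : (P (tt k) (A ∆ B)).toReal ≤ 2^k * (μ (A ∆ B)).toReal := by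
      calc (P (tt k) (A ∆ B)).toReal ≤ ((2:ENNReal)^k * μ (A ∆ B)).toReal :=
            ENNReal.toReal_mono
              (ENNReal.mul_ne_top (by simp) (measure_ne_top μ _)) (hμ2 k _)
        _ = 2^k * (μ (A ∆ B)).toReal := by
            rw [ENNReal.toReal_mul]
            norm_num
    have e4 : (P θ (A ∆ B)).toReal ≤ (μ (A ∆ B)).toReal :=
      ENNReal.toReal_mono (measure_ne_top μ _) (hμ1 _)
    have hlamdiff : lam k A - lam k B =
        (((P (tt k) A).toReal - (P (tt k) B).toReal)
          - ((P θ A).toReal - (P θ B).toReal)) * c k := by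
      rw [hlam]; ring
    rw [hlamdiff, abs_mul, abs_of_pos (hcpos k)]
    have hCcast : (C k : ℝ) = (2^k + 1) * c k := by
      simp only [hC, NNReal.coe_mul, NNReal.coe_add, NNReal.coe_pow, NNReal.coe_one,
        NNReal.coe_ofNat, Real.coe_toNNReal _ (hcpos k).le]
    rw [hCcast]
    have habs2 : |((P (tt k) A).toReal - (P (tt k) B).toReal)
        - ((P θ A).toReal - (P θ B).toReal)| ≤ (2^k + 1) * (μ (A ∆ B)).toReal := by
      refine le_trans (abs_sub _ _) ?_
      have : ((2:ℝ)^k + 1) * (μ (A ∆ B)).toReal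
          = 2^k * (μ (A ∆ B)).toReal + (μ (A ∆ B)).toReal := by ring
      rw [this]
      exact add_le_add (le_trans e1 e3) (le_trans e2 e4)
    calc _ ≤ ((2^k + 1) * (μ (A ∆ B)).toReal) * c k :=
          mul_le_mul_of_nonneg_right habs2 (hcpos k).le
      _ = (2^k + 1) * c k * (μ (A ∆ B)).toReal := by ring
  have hAddlam : ∀ k (A B : Set Ω), MeasurableSet A → MeasurableSet B → Disjoint A B →
      lam k (A ∪ B) = lam k A + lam k B := by
    intro k A B hA hB hAB
    rw [hlam]
    simp only
    rw [measure_union hAB hB, measure_union hAB hB,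
      ENNReal.toReal_add (hPt_ne k A) (hPt_ne k B),
      ENNReal.toReal_add (measure_ne_top _ _) (measure_ne_top _ _)]
    ring
  have hTend : ∀ B : Set Ω, MeasurableSet B →
      Filter.Tendsto (fun k => lam k B) Filter.atTop (nhds (D θ B φ)) := by
    intro B hB
    have hline : HasDerivAt (fun y : ℝ => θ + y • φ) φ 0 := by
      simpa using ((hasDerivAt_id (0:ℝ)).smul_const φ).const_add θ
    have hcomp : HasDerivAt (fun y : ℝ => (P (θ + y • φ) B).toReal) (D θ B φ) 0 := by
      have hf : HasFDerivAt (fun u => (P u B).toReal) (D θ B) (θ + (0:ℝ) • φ) := by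
        simpa using hD B hB θ hθ
      exact hf.comp_hasDerivAt 0 hline
    have hslope := hasDerivAt_iff_tendsto_slope.mp hcomp
    have hc_tend : Filter.Tendsto (fun k : ℕ => (c k)⁻¹) Filter.atTop (nhds 0) := by
      apply Filter.Tendsto.inv_tendsto_atTop
      have : Filter.Tendsto (fun k : ℕ => (k : ℝ)) Filter.atTop Filter.atTop :=
        tendsto_natCast_atTop_atTop
      exact Filter.tendsto_atTop_add_const_right _ _
        (Filter.tendsto_atTop_add_const_right _ _ this)
    have hc_ne : ∀ k, (c k)⁻¹ ≠ 0 := fun k => inv_ne_zero (hcpos k).ne'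
    have hmem : Filter.Tendsto (fun k : ℕ => (c k)⁻¹) Filter.atTop (nhdsWithin 0 {x | x ≠ 0}) :=
      tendsto_nhdsWithin_of_tendsto_nhds_of_eventually_within _ hc_tend
        (Filter.Eventually.of_forall (fun k => hc_ne k))
    have := hslope.comp hmem
    refine this.congr (fun k => ?_)
    rw [Function.comp_apply, slope_def_field]
    rw [hlam]
    simp only
    rw [htt]
    simp only [zero_smul, add_zero, sub_zero]
    rw [div_eq_mul_inv, inv_inv]
  -- main argument
  intro s hs hdisj
  have hUm : MeasurableSet (⋃ n, s n) := MeasurableSet.iUnion hs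
  have hDfinall : ∀ F : Finset ℕ, D θ (⋃ n ∈ F, s n) φ = ∑ n ∈ F, D θ (s n) φ := by
    intro F
    induction F using Finset.induction_on with
    | empty => simp [hDempty]
    | @insert a F' ha ih =>
      rw [Finset.set_biUnion_insert]
      have hdis : Disjoint (s a) (⋃ n ∈ F', s n) := by
        rw [Set.disjoint_left]
        intro x hxa hxU
        obtain ⟨n, hn, hxn⟩ := by simpa using hxU
        refine Set.disjoint_left.mp (hdisj (fun h => ha ?_)) hxa hxn
        rw [h]; exact hn
      rw [hDadd _ _ (hs a) (F'.measurableSet_biUnion (fun n _ => hs n)) hdis]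
      rw [Finset.sum_insert ha, ← ih]
      simp
  refine Metric.tendsto_atTop.mpr ?_
  intro ε hε
  obtain ⟨δ, hδ, hδprop⟩ := vhs_key μ lam (fun B => D θ B φ) C hLip hAddlam hTend (half_pos hε)
  -- tails
  set T : ℕ → Set Ω := fun N => ⋃ j, s (N + j) with hT
  have hTm : ∀ N, MeasurableSet (T N) := fun N => MeasurableSet.iUnion (fun j => hs (N + j))
  have hTanti : Antitone T := by
    refine antitone_nat_of_succ_le (fun N => ?_)
    intro x hx
    obtain ⟨j, hj⟩ := Set.mem_iUnion.mp hx
    exact Set.mem_iUnion.mpr ⟨j + 1, by rwa [show N + (j+1) = N + 1 + j by ring]⟩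
  have hTinter : ⋂ N, T N = ∅ := by
    ext x
    simp only [Set.mem_iInter, Set.mem_empty_iff_false, iff_false, not_forall]
    by_contra hcon
    push_neg at hcon
    obtain ⟨j0, hj0⟩ := Set.mem_iUnion.mp (hcon 0)
    obtain ⟨j1, hj1⟩ := Set.mem_iUnion.mp (hcon (0 + j0 + 1))
    have hne : 0 + j0 ≠ 0 + j0 + 1 + j1 := by omega
    exact Set.disjoint_left.mp (hdisj hne) hj0 hj1
  have htend0 : Filter.Tendsto (fun N => (μ (T N)).toReal) Filter.atTop (nhds 0) := by
    have h1 : Filter.Tendsto (fun N => μ (T N)) Filter.atTop (nhds (μ (⋂ N, T N))) :=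
      tendsto_measure_iInter_atTop (fun N => (hTm N).nullMeasurableSet) hTanti
        ⟨0, measure_ne_top μ _⟩
    rw [hTinter, measure_empty] at h1
    have := (ENNReal.tendsto_toReal (by norm_num : (0:ENNReal) ≠ ⊤)).comp h1
    exact this
  obtain ⟨N₀, hN₀⟩ := (htend0.eventually_lt_const hδ).exists
  refine ⟨Finset.range N₀, fun F hF => ?_⟩
  set V : Set Ω := ⋃ n ∈ F, s n with hV
  have hVm : MeasurableSet V := F.measurableSet_biUnion (fun n _ => hs n)
  -- finite additivity over the finset
  have hDfin : D θ V φ = ∑ n ∈ F, D θ (s n) φ := hDfinall F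
  have hVU : V ⊆ ⋃ n, s n := by
    intro x hx
    rcases Set.mem_iUnion₂.mp hx with ⟨n, hn, hxn⟩
    exact Set.mem_iUnion.mpr ⟨n, hxn⟩
  have hsplit : D θ (⋃ n, s n) φ = D θ V φ + D θ ((⋃ n, s n) \ V) φ := by
    have h1 := hDadd V ((⋃ n, s n) \ V) hVm (hUm.diff hVm) disjoint_sdiff_right
    rw [Set.union_diff_cancel hVU] at h1
    rw [h1]
    simp
  have hrest : ((⋃ n, s n) \ V) ⊆ T N₀ := by
    intro x hx
    obtain ⟨hxU, hxV⟩ := hx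
    obtain ⟨n, hxn⟩ := Set.mem_iUnion.mp hxU
    have hn : N₀ ≤ n := by
      by_contra hlt
      push_neg at hlt
      exact hxV (Set.mem_biUnion (hF (Finset.mem_range.mpr hlt)) hxn)
    exact Set.mem_iUnion.mpr ⟨n - N₀, by rwa [Nat.add_sub_cancel' hn]⟩
  have hmeasrest : (μ ((⋃ n, s n) \ V)).toReal < δ :=
    lt_of_le_of_lt (ENNReal.toReal_mono (measure_ne_top μ _) (measure_mono hrest)) hN₀
  have hbound := hδprop _ (hUm.diff hVm) hmeasrest
  rw [Real.dist_eq]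
  have : ∑ n ∈ F, D θ (s n) φ - D θ (⋃ n, s n) φ = -(D θ ((⋃ n, s n) \ V) φ) := by
    rw [hsplit, ← hDfin]; ring
  rw [this, abs_neg]
  exact lt_of_le_of_lt hbound (by linarith)
end

section
/- The kernel of the Fisher information operator is contained in the kernel of the derivative of any expectation: if f̂: Ω → ℝ^k is measurable with mean f̄(θ) = E_θ[f̂], then ker J_θ ⊆ ker D_θ f̄. -/
open MeasureTheory

local notation "⟪" x ", " y "⟫" => @inner ℝ _ _ x y

/-- The kernel of the Fisher information operator is contained in the
kernel of the derivative of any expectation: if `f̂ : Ω → ℝᵏ` is measurable with mean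
`f̄(θ) = E_θ[f̂]` (Fréchet derivative `D`, satisfying the exchange condition
`D φ = ∫ ⟪κ x, φ⟫ • f̂ x dP θ`), then `ker J_θ ⊆ ker D_θ f̄`. -/
theorem statement7
    {Ω : Type*} [MeasurableSpace Ω]
    {Ξ : Type*} [NormedAddCommGroup Ξ] [InnerProductSpace ℝ Ξ] [CompleteSpace Ξ]
    [SecondCountableTopology Ξ] {k : ℕ}
    (P : Ξ → Measure Ω) (hProb : ∀ t : Ξ, IsProbabilityMeasure (P t))
    (θ : Ξ)
    (f : Ω → EuclideanSpace ℝ (Fin k)) (hf : Measurable f)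
    (hfL2 : Integrable (fun x => ‖f x‖ ^ 2) (P θ))
    (κ : Ω → Ξ) (hκmeas : AEStronglyMeasurable κ (P θ))
    (hκL2 : Integrable (fun x => ‖κ x‖ ^ 2) (P θ))
    (J : Ξ →L[ℝ] Ξ)
    (hJ : ∀ φ χ : Ξ, ⟪φ, J χ⟫ = ∫ x, ⟪κ x, φ⟫ * ⟪κ x, χ⟫ ∂(P θ))
    (D : Ξ →L[ℝ] EuclideanSpace ℝ (Fin k))
    (hD : HasFDerivAt (fun t => ∫ x, f x ∂(P t)) D θ)
    (hexch : ∀ φ : Ξ, D φ = ∫ x, ⟪κ x, φ⟫ • f x ∂(P θ)) :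
    LinearMap.ker (J : Ξ →ₗ[ℝ] Ξ) ≤ LinearMap.ker (D : Ξ →ₗ[ℝ] EuclideanSpace ℝ (Fin k)) := by

  intro φ hφ
  have hφ0 : J φ = 0 := hφ
  have hg : ∫ x, ⟪κ x, φ⟫ * ⟪κ x, φ⟫ ∂(P θ) = 0 := by
    rw [← hJ φ φ, hφ0, inner_zero_right]
  have hmeas : AEStronglyMeasurable (fun x => ⟪κ x, φ⟫) (P θ) :=
    hκmeas.inner aestronglyMeasurable_const
  have hint : Integrable (fun x => ⟪κ x, φ⟫ * ⟪κ x, φ⟫) (P θ) := by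
    refine (hκL2.const_mul (‖φ‖ ^ 2)).mono (hmeas.mul hmeas) ?_
    filter_upwards with x
    have h1 : ‖⟪κ x, φ⟫‖ ≤ ‖κ x‖ * ‖φ‖ := norm_inner_le_norm _ _
    have h2 : ‖⟪κ x, φ⟫ * ⟪κ x, φ⟫‖ = ‖⟪κ x, φ⟫‖ * ‖⟪κ x, φ⟫‖ := norm_mul _ _
    have h3 : ‖⟪κ x, φ⟫‖ * ‖⟪κ x, φ⟫‖ ≤ (‖κ x‖ * ‖φ‖) * (‖κ x‖ * ‖φ‖) :=
      mul_le_mul h1 h1 (norm_nonneg _) (by positivity)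
    calc ‖⟪κ x, φ⟫ * ⟪κ x, φ⟫‖ ≤ (‖κ x‖ * ‖φ‖) * (‖κ x‖ * ‖φ‖) := h2 ▸ h3
      _ = ‖φ‖ ^ 2 * ‖κ x‖ ^ 2 := by ring
      _ ≤ ‖‖φ‖ ^ 2 * ‖κ x‖ ^ 2‖ := le_abs_self _
  have hae : (fun x => ⟪κ x, φ⟫ * ⟪κ x, φ⟫) =ᵐ[P θ] 0 := by
    refine (integral_eq_zero_iff_of_nonneg ?_ hint).mp hg
    intro x
    exact mul_self_nonneg _
  have hae2 : (fun x => ⟪κ x, φ⟫) =ᵐ[P θ] 0 := by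
    filter_upwards [hae] with x hx
    exact mul_self_eq_zero.mp hx
  have : D φ = 0 := by
    rw [hexch φ]
    rw [integral_congr_ae (g := fun _ => (0 : EuclideanSpace ℝ (Fin k)))]
    · exact integral_zero _ _
    · filter_upwards [hae2] with x hx
      simp [hx]
  exact this
end

section
/- If a locally unbiased estimator of a differentiable function f: Θ → ℝ exists at θ, then ∇_θ f ∈ (ker J_θ)^⊥. -/
open MeasureTheory

local notation "⟪" x ", " y "⟫" => @inner ℝ _ _ x y

/-- If a locally unbiased estimator `f̂` of a differentiable function
`f : Θ → ℝ` exists at `θ` (i.e. `E_θ[f̂] = f(θ)` and `D_θ E_θ[f̂] = D_θ f`), then the Riesz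
gradient `∇_θ f` belongs to `(ker J_θ)ᗮ`. -/
theorem statement8
    {Ω : Type*} [MeasurableSpace Ω]
    {Ξ : Type*} [NormedAddCommGroup Ξ] [InnerProductSpace ℝ Ξ] [CompleteSpace Ξ]
    [SecondCountableTopology Ξ]
    (P : Ξ → Measure Ω) (hProb : ∀ t : Ξ, IsProbabilityMeasure (P t))
    (θ : Ξ)
    (f : Ξ → ℝ) (Df : Ξ →L[ℝ] ℝ) (hf : HasFDerivAt f Df θ)
    (fhat : Ω → ℝ) (hfhat : Measurable fhat)
    (hfL2 : Integrable (fun x => (fhat x) ^ 2) (P θ))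
    (κ : Ω → Ξ) (hκmeas : AEStronglyMeasurable κ (P θ))
    (hκL2 : Integrable (fun x => ‖κ x‖ ^ 2) (P θ))
    (J : Ξ →L[ℝ] Ξ)
    (hJ : ∀ φ χ : Ξ, ⟪φ, J χ⟫ = ∫ x, ⟪κ x, φ⟫ * ⟪κ x, χ⟫ ∂(P θ))
    (Dmean : Ξ →L[ℝ] ℝ)
    (hDmean : HasFDerivAt (fun t => ∫ x, fhat x ∂(P t)) Dmean θ)
    (hexch : ∀ φ : Ξ, Dmean φ = ∫ x, fhat x * ⟪κ x, φ⟫ ∂(P θ))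
    -- local unbiasedness at θ:
    (hunbiased : ∫ x, fhat x ∂(P θ) = f θ)
    (hlocal : Dmean = Df) :
    (InnerProductSpace.toDual ℝ Ξ).symm Df ∈ (LinearMap.ker (J : Ξ →ₗ[ℝ] Ξ))ᗮ := by
  rw [Submodule.mem_orthogonal]
  intro χ hχ
  rw [real_inner_comm, InnerProductSpace.toDual_symm_apply, ← hlocal, hexch]
  have hJχ : J χ = 0 := hχ
  have h0 : (0:ℝ) = ∫ x, ⟪κ x, χ⟫ * ⟪κ x, χ⟫ ∂(P θ) := by
    have := hJ χ χ
    rwa [hJχ, inner_zero_right] at this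
  have hint : Integrable (fun x => ⟪κ x, χ⟫ * ⟪κ x, χ⟫) (P θ) := by
    refine Integrable.mono' (hκL2.const_mul (‖χ‖^2)) ?_ ?_
    · exact ((hκmeas.inner aestronglyMeasurable_const).mul
        (hκmeas.inner aestronglyMeasurable_const))
    · refine Filter.Eventually.of_forall fun x => ?_
      have h1 : |⟪κ x, χ⟫| ≤ ‖κ x‖ * ‖χ‖ := abs_real_inner_le_norm _ _
      calc ‖⟪κ x, χ⟫ * ⟪κ x, χ⟫‖ = |⟪κ x, χ⟫| * |⟪κ x, χ⟫| := by
            rw [Real.norm_eq_abs, abs_mul]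
        _ ≤ (‖κ x‖ * ‖χ‖) * (‖κ x‖ * ‖χ‖) :=
            mul_le_mul h1 h1 (abs_nonneg _) (by positivity)
        _ = ‖χ‖^2 * ‖κ x‖^2 := by ring
  have hae : (fun x => ⟪κ x, χ⟫ * ⟪κ x, χ⟫) =ᵐ[P θ] 0 := by
    rw [← MeasureTheory.integral_eq_zero_iff_of_nonneg
      (fun x => mul_self_nonneg _) hint]
    exact h0.symm
  have hae2 : (fun x => fhat x * ⟪κ x, χ⟫) =ᵐ[P θ] 0 := by
    filter_upwards [hae] with x hx
    have : ⟪κ x, χ⟫ = 0 := by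
      have := mul_self_eq_zero.mp hx
      exact this
    simp [this]
  rw [integral_congr_ae hae2]; simp
end

section
/- Moore-Penrose inverse comparison: if J^M and J^S are positive bounded operators with J^M ≤ J^S, then for every φ in (ker J^M)^⊥, one has (φ, (J^M)⁺ φ) ≥ (φ, (J^S)⁺ φ), assuming both Moore-Penrose inverses exist. -/
local notation "⟪" x ", " y "⟫" => @inner ℝ _ _ x y

-- uniqueness of Moore–Penrose inverse in a star ring
private lemma mpUnique {R : Type*} [Ring R] [StarRing R] {a x y : R}
    (hx1 : a * x * a = a) (hx2 : x * a * x = x)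
    (hx3 : star (a * x) = a * x) (hx4 : star (x * a) = x * a)
    (hy1 : a * y * a = a) (hy2 : y * a * y = y)
    (hy3 : star (a * y) = a * y) (hy4 : star (y * a) = y * a) : x = y := by
  have hsa : star a = star a * (a * y) := by
    conv_lhs => rw [← hy1]
    rw [star_mul, hy3]
  have hsa' : star a = (y * a) * star a := by
    conv_lhs => rw [← hy1, mul_assoc]
    rw [star_mul, hy4]
  have hax : a * x = a * y := by
    calc a * x = star (a * x) := hx3.symm
    _ = star x * star a := star_mul _ _
    _ = star x * (star a * (a * y)) := by rw [← hsa]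
    _ = (star x * star a) * (a * y) := (mul_assoc _ _ _).symm
    _ = star (a * x) * (a * y) := by rw [star_mul]
    _ = (a * x) * (a * y) := by rw [hx3]
    _ = ((a * x) * a) * y := (mul_assoc _ _ _).symm
    _ = a * y := by rw [hx1]
  have hxa : x * a = y * a := by
    calc x * a = star (x * a) := hx4.symm
    _ = star a * star x := star_mul _ _
    _ = ((y * a) * star a) * star x := by rw [← hsa']
    _ = (y * a) * (star a * star x) := mul_assoc _ _ _
    _ = (y * a) * star (x * a) := by rw [star_mul]
    _ = (y * a) * (x * a) := by rw [hx4]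
    _ = y * ((a * x) * a) := by rw [mul_assoc, ← mul_assoc a x a]
    _ = y * a := by rw [hx1]
  calc x = x * a * x := hx2.symm
  _ = x * (a * x) := mul_assoc _ _ _
  _ = x * (a * y) := by rw [hax]
  _ = (x * a) * y := (mul_assoc _ _ _).symm
  _ = (y * a) * y := by rw [hxa]
  _ = y := hy2


section Aux
variable {Ξ : Type*} [NormedAddCommGroup Ξ] [InnerProductSpace ℝ Ξ] [CompleteSpace Ξ]

private lemma sa_inner (A : Ξ →L[ℝ] Ξ) (hA : IsSelfAdjoint A) (x y : Ξ) :
    ⟪x, A y⟫ = ⟪A x, y⟫ := by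
  conv_rhs => rw [← hA.adjoint_eq]
  rw [ContinuousLinearMap.adjoint_inner_left]

private lemma proj_fix (A Ap : Ξ →L[ℝ] Ξ) (hA : IsSelfAdjoint A)
    (hc : A ∘L Ap = Ap ∘L A) (h1 : A ∘L Ap ∘L A = A)
    {φ : Ξ} (hφ : φ ∈ (LinearMap.ker (A : Ξ →ₗ[ℝ] Ξ))ᗮ) : A (Ap φ) = φ := by
  set r := φ - A (Ap φ) with hr
  have hker : A r = 0 := by
    have h2 : A (A (Ap φ)) = A φ := by
      have hc' := congrArg (fun T : Ξ →L[ℝ] Ξ => T φ) hc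
      simp only [ContinuousLinearMap.comp_apply] at hc'
      rw [hc']
      have h1' := congrArg (fun T : Ξ →L[ℝ] Ξ => T φ) h1
      simpa [ContinuousLinearMap.comp_apply] using h1'
    simp [hr, map_sub, h2]
  have horth : r ∈ (LinearMap.ker (A : Ξ →ₗ[ℝ] Ξ))ᗮ := by
    apply Submodule.sub_mem _ hφ
    intro u hu
    have hu0 : A u = 0 := hu
    rw [real_inner_comm, ← sa_inner A hA (Ap φ) u, hu0, inner_zero_right]
  have h0 : ⟪r, r⟫ = 0 := horth r hker
  have hr0 : r = 0 := by rwa [inner_self_eq_zero] at h0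
  rw [hr] at hr0
  exact (sub_eq_zero.mp hr0).symm

private lemma ker_mono (A B : Ξ →L[ℝ] Ξ) (hA : IsSelfAdjoint A)
    (hApos : ∀ φ : Ξ, 0 ≤ ⟪φ, A φ⟫) (hle : ∀ φ : Ξ, ⟪φ, A φ⟫ ≤ ⟪φ, B φ⟫) :
    LinearMap.ker (B : Ξ →ₗ[ℝ] Ξ) ≤ LinearMap.ker (A : Ξ →ₗ[ℝ] Ξ) := by
  intro z hz
  have hz0 : B z = 0 := hz
  have h0 : ⟪z, A z⟫ = 0 := by
    have h := hle z
    rw [hz0, inner_zero_right] at h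
    exact le_antisymm h (hApos z)
  have key : ∀ x : Ξ, ⟪x, A z⟫ = 0 := by
    intro x
    by_contra hc
    set c : ℝ := ⟪x, A z⟫ with hcdef
    have hq : ∀ t : ℝ, 0 ≤ ⟪x, A x⟫ + 2 * t * c := by
      intro t
      have h := hApos (x + t • z)
      rw [map_add, map_smul] at h
      have e1 : ⟪z, A x⟫ = c := by
        rw [sa_inner A hA z x, real_inner_comm, ← hcdef]
      rw [inner_add_left, inner_add_right, inner_add_right,
        real_inner_smul_left, real_inner_smul_left, real_inner_smul_right,
        real_inner_smul_right, h0, e1, ← hcdef] at h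
      linarith
    have hq' := hq (-(⟪x, A x⟫ + 1) / (2 * c))
    have hce : 2 * (-(⟪x, A x⟫ + 1) / (2 * c)) * c = -(⟪x, A x⟫ + 1) := by
      field_simp
    linarith
  have : ⟪A z, A z⟫ = 0 := key (A z)
  rwa [inner_self_eq_zero] at this

end Aux

/-- **Moore–Penrose inverse comparison.** If `JM` and `JS` are positive
self-adjoint bounded operators on a real Hilbert space `Ξ` with `JM ≤ JS`, and both
Moore–Penrose inverses `JMp`, `JSp` exist, then for every `φ ∈ (ker JM)ᗮ` one has
`(φ, JM⁺ φ) ≥ (φ, JS⁺ φ)`. -/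
theorem statement15
    {Ξ : Type*} [NormedAddCommGroup Ξ] [InnerProductSpace ℝ Ξ] [CompleteSpace Ξ]
    (JM JS JMp JSp : Ξ →L[ℝ] Ξ)
    (hMsa : IsSelfAdjoint JM) (hSsa : IsSelfAdjoint JS)
    (hMpos : ∀ φ : Ξ, 0 ≤ ⟪φ, JM φ⟫) (hSpos : ∀ φ : Ξ, 0 ≤ ⟪φ, JS φ⟫)
    (hle : ∀ φ : Ξ, ⟪φ, JM φ⟫ ≤ ⟪φ, JS φ⟫)
    -- JMp is the Moore–Penrose inverse of JM:
    (hM1 : JM ∘L JMp ∘L JM = JM) (hM2 : JMp ∘L JM ∘L JMp = JMp)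
    (hM3 : IsSelfAdjoint (JM ∘L JMp)) (hM4 : IsSelfAdjoint (JMp ∘L JM))
    -- JSp is the Moore–Penrose inverse of JS:
    (hS1 : JS ∘L JSp ∘L JS = JS) (hS2 : JSp ∘L JS ∘L JSp = JSp)
    (hS3 : IsSelfAdjoint (JS ∘L JSp)) (hS4 : IsSelfAdjoint (JSp ∘L JS)) :
    ∀ φ ∈ (LinearMap.ker (JM : Ξ →ₗ[ℝ] Ξ))ᗮ, ⟪φ, JSp φ⟫ ≤ ⟪φ, JMp φ⟫ := by
  -- translate composition hypotheses into ring multiplication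
  have hM1' : JM * JMp * JM = JM := by
    rw [show JM * JMp * JM = JM ∘L JMp ∘L JM from rfl]; exact hM1
  have hM2' : JMp * JM * JMp = JMp := by
    rw [show JMp * JM * JMp = JMp ∘L JM ∘L JMp from rfl]; exact hM2
  have hM3' : star (JM * JMp) = JM * JMp := hM3
  have hM4' : star (JMp * JM) = JMp * JM := hM4
  have hS1' : JS * JSp * JS = JS := by
    rw [show JS * JSp * JS = JS ∘L JSp ∘L JS from rfl]; exact hS1
  have hS2' : JSp * JS * JSp = JSp := by
    rw [show JSp * JS * JSp = JSp ∘L JS ∘L JSp from rfl]; exact hS2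
  have hS3' : star (JS * JSp) = JS * JSp := hS3
  have hS4' : star (JSp * JS) = JSp * JS := hS4
  -- self-adjointness of the pseudoinverses, via uniqueness of the MP inverse
  have mkSa : ∀ (A Ap : Ξ →L[ℝ] Ξ), star A = A → A * Ap * A = A → Ap * A * Ap = Ap →
      star (A * Ap) = A * Ap → star (Ap * A) = Ap * A → star Ap = Ap := by
    intro A Ap hA h1 h2 h3 h4
    have e : A * star Ap = star (Ap * A) := by rw [star_mul, hA]
    have e' : star Ap * A = star (A * Ap) := by rw [star_mul, hA]
    have hy1 : A * star Ap * A = A := by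
      have := congrArg star h1
      rw [star_mul, star_mul, hA] at this
      rw [mul_assoc]; exact this
    have hy2 : star Ap * A * star Ap = star Ap := by
      have := congrArg star h2
      rw [star_mul, star_mul, hA] at this
      rw [mul_assoc]; exact this
    have hy3 : star (A * star Ap) = A * star Ap := by rw [e, h4]; exact h4
    have hy4 : star (star Ap * A) = star Ap * A := by rw [e', h3]; exact h3
    exact (mpUnique h1 h2 h3 h4 hy1 hy2 hy3 hy4).symm
  have hMpsa : IsSelfAdjoint JMp := mkSa JM JMp hMsa hM1' hM2' hM3' hM4'
  have hSpsa : IsSelfAdjoint JSp := mkSa JS JSp hSsa hS1' hS2' hS3' hS4'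
  -- commutation
  have hMc : JM ∘L JMp = JMp ∘L JM := by
    have : star (JM * JMp) = JMp * JM := by
      rw [star_mul, hMpsa.star_eq, hMsa.star_eq]
    rw [show JM ∘L JMp = JM * JMp from rfl, show JMp ∘L JM = JMp * JM from rfl,
      ← this, hM3']
  have hSc : JS ∘L JSp = JSp ∘L JS := by
    have : star (JS * JSp) = JSp * JS := by
      rw [star_mul, hSpsa.star_eq, hSsa.star_eq]
    rw [show JS ∘L JSp = JS * JSp from rfl, show JSp ∘L JS = JSp * JS from rfl,
      ← this, hS3']
  intro φ hφ
  have hφS : φ ∈ (LinearMap.ker (JS : Ξ →ₗ[ℝ] Ξ))ᗮ :=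
    Submodule.orthogonal_le (ker_mono JM JS hMsa hMpos hle) hφ
  have hψ : JM (JMp φ) = φ := proj_fix JM JMp hMsa hMc hM1 hφ
  have hχ : JS (JSp φ) = φ := proj_fix JS JSp hSsa hSc hS1 hφS
  set χ := JSp φ with hχdef
  set ψ := JMp φ with hψdef
  have key : 0 ≤ ⟪χ - ψ, JM (χ - ψ)⟫ := hMpos _
  have expand : ⟪χ - ψ, JM (χ - ψ)⟫ = ⟪χ, JM χ⟫ - 2 * ⟪φ, χ⟫ + ⟪φ, ψ⟫ := by
    rw [map_sub, inner_sub_left, inner_sub_right, inner_sub_right, hψ]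
    have e1 : ⟪ψ, JM χ⟫ = ⟪φ, χ⟫ := by rw [sa_inner JM hMsa, hψ]
    have e2 : ⟪χ, φ⟫ = ⟪φ, χ⟫ := real_inner_comm _ _
    have e3 : ⟪ψ, φ⟫ = ⟪φ, ψ⟫ := real_inner_comm _ _
    rw [e1, e2, e3]; ring
  have hMS : ⟪χ, JM χ⟫ ≤ ⟪φ, χ⟫ := by
    have h := hle χ
    rw [hχ] at h
    exact h.trans_eq (real_inner_comm _ _)
  rw [expand] at key
  linarith
end

section
/- Operator Schur complement theorem: for a self-adjoint operator M = [[A, B],[B*, C]] on ℋ ⊕ 𝒦, the condition M ≥ 0 is equivalent to: A ≥ 0, ran B ⊆ ran A, and C − B*A⁺B ≥ 0; and also equivalent to: C ≥ 0, (ker B)^⊥ ⊆ (ker C)^⊥, and A − B C⁺ B* ≥ 0. -/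
open ContinuousLinearMap

local notation "⟪" x ", " y "⟫" => @inner ℂ _ _ x y

section Aux

variable {E : Type*} [NormedAddCommGroup E] [InnerProductSpace ℂ E] [CompleteSpace E]

private lemma sa_move {T : E →L[ℂ] E} (hT : IsSelfAdjoint T) (u v : E) :
    ⟪T u, v⟫ = ⟪u, T v⟫ := by
  conv_lhs => rw [← hT.adjoint_eq]
  exact adjoint_inner_left T v u

private lemma isPositive_iff' (T : E →L[ℂ] E) :
    T.IsPositive ↔ ∀ u, 0 ≤ (⟪u, T u⟫).re ∧ (⟪u, T u⟫).im = 0 := by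
  rw [isPositive_iff_complex]
  refine forall_congr' fun u => ?_
  have h1 : ⟪T u, u⟫ = (starRingEnd ℂ) ⟪u, T u⟫ := (inner_conj_symm (T u) u).symm
  rw [h1]
  constructor
  · rintro ⟨h2, h3⟩
    have h4 := congrArg Complex.im h2
    simp only [RCLike.re_to_complex, Complex.ofReal_im, Complex.conj_im] at h4
    have h5 : 0 ≤ (⟪u, T u⟫).re := by
      simpa only [RCLike.re_to_complex, Complex.conj_re] using h3
    exact ⟨h5, by linarith⟩
  · rintro ⟨h2, h3⟩
    refine ⟨?_, by simpa only [RCLike.re_to_complex, Complex.conj_re] using h2⟩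
    apply Complex.ext
    · simp [RCLike.re_to_complex]
    · simp only [RCLike.re_to_complex, Complex.ofReal_im]
      simp only [Complex.conj_im, h3, neg_zero]

private lemma mem_range_of_orth (T Tp : E →L[ℂ] E) (hT : IsSelfAdjoint T)
    (hT1 : T ∘L Tp ∘L T = T) (hT4 : IsSelfAdjoint (Tp ∘L T)) (u : E)
    (h : ∀ v, T v = 0 → ⟪v, u⟫ = 0) : ∃ w, T w = u := by
  set q := u - Tp (T u) with hqdef
  have hTq : T q = 0 := by
    have h0 := congrArg (fun S => S u) hT1
    simp only [comp_apply] at h0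
    simp [hqdef, map_sub, h0]
  have h1 : ⟪q, u⟫ = 0 := h q hTq
  have h2 : ⟪q, Tp (T u)⟫ = 0 := by
    have : ⟪q, (Tp ∘L T) u⟫ = ⟪(Tp ∘L T) q, u⟫ := (sa_move hT4 q u).symm
    simp only [comp_apply] at this
    rw [this, hTq]
    simp
  have hq0 : q = 0 := by
    have : ⟪q, q⟫ = 0 := by
      rw [hqdef]
      rw [inner_sub_right, ← hqdef, h1, h2, sub_zero]
    exact inner_self_eq_zero.mp this
  have hu : u = (Tp ∘L T) u := by
    have h3 : u - Tp (T u) = 0 := hq0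
    have h4 : u = Tp (T u) := by linear_combination (norm := module) h3
    simpa using h4
  refine ⟨(adjoint Tp) u, ?_⟩
  have hadj : Tp ∘L T = T ∘L adjoint Tp := by
    conv_lhs => rw [← hT4.adjoint_eq]
    rw [adjoint_comp, hT.adjoint_eq]
  have := hu
  rw [hadj] at this
  simpa using this.symm

end Aux

section Main

variable {H K : Type*} [NormedAddCommGroup H] [InnerProductSpace ℂ H] [CompleteSpace H]
  [NormedAddCommGroup K] [InnerProductSpace ℂ K] [CompleteSpace K]

private theorem schur_aux (A : H →L[ℂ] H) (B : K →L[ℂ] H) (C : K →L[ℂ] K)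
    (hA : IsSelfAdjoint A) (Ap : H →L[ℂ] H)
    (hA1 : A ∘L Ap ∘L A = A) (hA4 : IsSelfAdjoint (Ap ∘L A)) :
    (∀ (x : H) (y : K),
        0 ≤ (⟪x, A x⟫ + ⟪x, B y⟫ + ⟪y, (adjoint B) x⟫ + ⟪y, C y⟫).re ∧
        (⟪x, A x⟫ + ⟪x, B y⟫ + ⟪y, (adjoint B) x⟫ + ⟪y, C y⟫).im = 0) ↔
      (A.IsPositive ∧ LinearMap.range (B : K →ₗ[ℂ] H) ≤ LinearMap.range (A : H →ₗ[ℂ] H) ∧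
        (C - (adjoint B) ∘L Ap ∘L B).IsPositive) := by
  have hAApA : ∀ u, A (Ap (A u)) = A u := fun u => by
    have := congrArg (fun S => S u) hA1
    simpa using this
  constructor
  · intro h
    have hApos : A.IsPositive := by
      rw [_root_.isPositive_iff']
      intro u
      simpa using h u 0
    have hrange : LinearMap.range (B : K →ₗ[ℂ] H) ≤ LinearMap.range (A : H →ₗ[ℂ] H) := by
      rintro _ ⟨y, rfl⟩
      rw [LinearMap.mem_range]
      apply mem_range_of_orth A Ap hA hA1 hA4
      intro v hv
      by_contra hc
      set c := ⟪v, B y⟫ with hcdef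
      have hn : 0 < Complex.normSq c := by rwa [Complex.normSq_pos]
      set d := (⟪y, C y⟫).re with hddef
      set s : ℝ := -(d + 1) / (2 * Complex.normSq c) with hsdef
      have hkey := (h ((s : ℂ) • c • v) y).1
      have e1 : ⟪((s : ℂ) • c • v : H), A ((s : ℂ) • c • v)⟫ = 0 := by
        simp [map_smul, hv]
      have e2 : ⟪((s : ℂ) • c • v : H), B y⟫ = (s : ℂ) * Complex.normSq c := by
        rw [inner_smul_left, inner_smul_left, ← hcdef, Complex.conj_ofReal]
        rw [Complex.normSq_eq_conj_mul_self]
      have e3 : ⟪y, (adjoint B) ((s : ℂ) • c • v)⟫ = (s : ℂ) * Complex.normSq c := by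
        rw [adjoint_inner_right, inner_smul_right, inner_smul_right]
        have : ⟪B y, v⟫ = (starRingEnd ℂ) c := by rw [hcdef, inner_conj_symm]
        rw [this, Complex.normSq_eq_conj_mul_self]
        ring
      rw [e1, e2, e3, zero_add] at hkey
      have hre : ((s : ℂ) * Complex.normSq c + (s : ℂ) * Complex.normSq c
          + ⟪y, C y⟫).re = 2 * s * Complex.normSq c + d := by
        simp [Complex.add_re, Complex.mul_re, hddef]
        ring
      rw [hre] at hkey
      rw [hsdef] at hkey
      have : 2 * (-(d + 1) / (2 * Complex.normSq c)) * Complex.normSq c = -(d + 1) := by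
        field_simp
      rw [this] at hkey
      linarith
    refine ⟨hApos, hrange, ?_⟩
    rw [_root_.isPositive_iff']
    intro y
    obtain ⟨w, hw⟩ := hrange (LinearMap.mem_range.mpr ⟨y, rfl⟩)
    have hp1 : A (Ap (B y)) = B y := by
      rw [← (show A w = B y from hw)]
      exact hAApA w
    have key : (⟪(-(Ap (B y)) : H), A (-(Ap (B y)))⟫ + ⟪(-(Ap (B y)) : H), B y⟫ +
        ⟪y, (adjoint B) (-(Ap (B y)))⟫ + ⟪y, C y⟫)
        = ⟪y, (C - (adjoint B) ∘L Ap ∘L B) y⟫ := by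
      have t1 : ⟪(-(Ap (B y)) : H), A (-(Ap (B y)))⟫ = ⟪(Ap (B y) : H), B y⟫ := by
        rw [map_neg, inner_neg_neg, hp1]
      have t2 : ⟪(-(Ap (B y)) : H), B y⟫ = -⟪(Ap (B y) : H), B y⟫ := inner_neg_left _ _
      have t3 : ⟪y, (adjoint B) (-(Ap (B y)))⟫ = -⟪B y, Ap (B y)⟫ := by
        rw [adjoint_inner_right, inner_neg_right]
      have r : ⟪y, (C - (adjoint B) ∘L Ap ∘L B) y⟫ = ⟪y, C y⟫ - ⟪B y, Ap (B y)⟫ := by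
        simp only [sub_apply, comp_apply, inner_sub_right, adjoint_inner_right]
      rw [t1, t2, t3, r]
      ring
    rw [← key]
    exact h (-(Ap (B y))) y
  · rintro ⟨hApos, hrange, hS⟩ x y
    obtain ⟨w, hw⟩ := hrange (LinearMap.mem_range.mpr ⟨y, rfl⟩)
    replace hw : A w = B y := hw
    have key : ⟪x, A x⟫ + ⟪x, B y⟫ + ⟪y, (adjoint B) x⟫ + ⟪y, C y⟫
        = ⟪x + w, A (x + w)⟫ + ⟪y, (C - (adjoint B) ∘L Ap ∘L B) y⟫ := by
      have h1 : ⟪y, (adjoint B) x⟫ = ⟪A w, x⟫ := by rw [adjoint_inner_right, ← hw]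
      have h2 : ⟪y, (C - (adjoint B) ∘L Ap ∘L B) y⟫ = ⟪y, C y⟫ - ⟪w, A w⟫ := by
        simp only [sub_apply, comp_apply, inner_sub_right, adjoint_inner_right]
        rw [← hw, sa_move hA w (Ap (A w)), hAApA w]
      have h3 : ⟪x, B y⟫ = ⟪x, A w⟫ := by rw [hw]
      have h4 : ⟪x + w, A (x + w)⟫
          = ⟪x, A x⟫ + ⟪x, A w⟫ + (⟪A w, x⟫ + ⟪w, A w⟫) := by
        rw [map_add, inner_add_left, inner_add_right, inner_add_right, ← sa_move hA w x]
      rw [h1, h2, h3, h4]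
      ring
    rw [key]
    have hA' := (_root_.isPositive_iff' A).mp hApos (x + w)
    have hS' := (_root_.isPositive_iff' _).mp hS y
    constructor
    · simp only [Complex.add_re]
      linarith [hA'.1, hS'.1]
    · simp only [Complex.add_im, hA'.2, hS'.2, add_zero]

end Main


/-- **operator Schur complement theorem.** For the self-adjoint block
operator `M = [[A, B],[B*, C]]` on `ℋ ⊕ 𝒦` (`A`, `C` self-adjoint, with Moore–Penrose
inverses `Ap`, `Cp`), positivity of `M`—expressed by
`0 ≤ re(⟪x, Ax⟫ + ⟪x, By⟫ + ⟪y, B*x⟫ + ⟪y, Cy⟫)` for all `x ∈ ℋ`, `y ∈ 𝒦`—is equivalent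
to `A ≥ 0 ∧ ran B ⊆ ran A ∧ C − B*A⁺B ≥ 0`, and also equivalent to
`C ≥ 0 ∧ (ker B)ᗮ ⊆ (ker C)ᗮ ∧ A − B C⁺ B* ≥ 0`. -/
theorem statement16
    {H K : Type*} [NormedAddCommGroup H] [InnerProductSpace ℂ H] [CompleteSpace H]
    [NormedAddCommGroup K] [InnerProductSpace ℂ K] [CompleteSpace K]
    (A : H →L[ℂ] H) (B : K →L[ℂ] H) (C : K →L[ℂ] K)
    (hA : IsSelfAdjoint A) (hC : IsSelfAdjoint C)
    (Ap : H →L[ℂ] H) (Cp : K →L[ℂ] K)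
    -- Ap is the Moore–Penrose inverse of A:
    (hA1 : A ∘L Ap ∘L A = A) (hA2 : Ap ∘L A ∘L Ap = Ap)
    (hA3 : IsSelfAdjoint (A ∘L Ap)) (hA4 : IsSelfAdjoint (Ap ∘L A))
    -- Cp is the Moore–Penrose inverse of C:
    (hC1 : C ∘L Cp ∘L C = C) (hC2 : Cp ∘L C ∘L Cp = Cp)
    (hC3 : IsSelfAdjoint (C ∘L Cp)) (hC4 : IsSelfAdjoint (Cp ∘L C)) :
    ((∀ (x : H) (y : K),
        0 ≤ (⟪x, A x⟫ + ⟪x, B y⟫ + ⟪y, (adjoint B) x⟫ + ⟪y, C y⟫).re ∧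
        (⟪x, A x⟫ + ⟪x, B y⟫ + ⟪y, (adjoint B) x⟫ + ⟪y, C y⟫).im = 0) ↔
      (A.IsPositive ∧ LinearMap.range (B : K →ₗ[ℂ] H) ≤ LinearMap.range (A : H →ₗ[ℂ] H) ∧
        (C - (adjoint B) ∘L Ap ∘L B).IsPositive)) ∧
    ((∀ (x : H) (y : K),
        0 ≤ (⟪x, A x⟫ + ⟪x, B y⟫ + ⟪y, (adjoint B) x⟫ + ⟪y, C y⟫).re ∧
        (⟪x, A x⟫ + ⟪x, B y⟫ + ⟪y, (adjoint B) x⟫ + ⟪y, C y⟫).im = 0) ↔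
      (C.IsPositive ∧ (LinearMap.ker (B : K →ₗ[ℂ] H))ᗮ ≤ (LinearMap.ker (C : K →ₗ[ℂ] K))ᗮ ∧
        (A - B ∘L Cp ∘L (adjoint B)).IsPositive)) := by
  constructor
  · exact schur_aux A B C hA Ap hA1 hA4
  · have base := schur_aux C (adjoint B) A hC Cp hC1 hC4
    rw [adjoint_adjoint] at base
    have hquant : (∀ (x : H) (y : K),
        0 ≤ (⟪x, A x⟫ + ⟪x, B y⟫ + ⟪y, (adjoint B) x⟫ + ⟪y, C y⟫).re ∧
        (⟪x, A x⟫ + ⟪x, B y⟫ + ⟪y, (adjoint B) x⟫ + ⟪y, C y⟫).im = 0) ↔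
        (∀ (x : K) (y : H),
        0 ≤ (⟪x, C x⟫ + ⟪x, (adjoint B) y⟫ + ⟪y, B x⟫ + ⟪y, A y⟫).re ∧
        (⟪x, C x⟫ + ⟪x, (adjoint B) y⟫ + ⟪y, B x⟫ + ⟪y, A y⟫).im = 0) := by
      constructor
      · intro h x y
        have e : ⟪y, A y⟫ + ⟪y, B x⟫ + ⟪x, (adjoint B) y⟫ + ⟪x, C x⟫
            = ⟪x, C x⟫ + ⟪x, (adjoint B) y⟫ + ⟪y, B x⟫ + ⟪y, A y⟫ := by ring
        rw [← e]
        exact h y x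
      · intro h x y
        have e : ⟪y, C y⟫ + ⟪y, (adjoint B) x⟫ + ⟪x, B y⟫ + ⟪x, A x⟫
            = ⟪x, A x⟫ + ⟪x, B y⟫ + ⟪y, (adjoint B) x⟫ + ⟪y, C y⟫ := by ring
        rw [← e]
        exact h y x
    have hker : (LinearMap.range ((adjoint B : H →L[ℂ] K) : H →ₗ[ℂ] K) ≤ LinearMap.range (C : K →ₗ[ℂ] K)) ↔
        ((LinearMap.ker (B : K →ₗ[ℂ] H))ᗮ ≤ (LinearMap.ker (C : K →ₗ[ℂ] K))ᗮ) := by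
      constructor
      · intro hr
        apply Submodule.orthogonal_le
        intro v hv
        have hv' : C v = 0 := hv
        have hmem := hr (LinearMap.mem_range.mpr ⟨B v, rfl⟩)
        obtain ⟨t, ht⟩ := LinearMap.mem_range.mp hmem
        have hzero : ⟪(B v : H), B v⟫ = 0 := by
          rw [← adjoint_inner_left, ← (show C t = adjoint B (B v) from ht), sa_move hC t v, hv', inner_zero_right]
        rw [LinearMap.mem_ker]
        simpa using inner_self_eq_zero.mp hzero
      · intro ho
        rintro _ ⟨u, rfl⟩
        rw [LinearMap.mem_range]
        apply mem_range_of_orth C Cp hC hC1 hC4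
        intro v hv
        have hmem : (adjoint B) u ∈ (LinearMap.ker (B : K →ₗ[ℂ] H))ᗮ := by
          rw [Submodule.mem_orthogonal]
          intro z hz
          have hz' : B z = 0 := hz
          rw [adjoint_inner_right, hz', inner_zero_left]
        have := ho hmem
        rw [Submodule.mem_orthogonal] at this
        exact this v (LinearMap.mem_ker.mpr hv)
    rw [hker] at base
    exact hquant.trans base
end
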